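/- Let β_A, β_H > 0, α_A, α_H > 0 with α_H·β_A − α_A·β_H ≠ 0, let λ ∈ (0,1) and ω₀ ≥ 1. Set p_L := α_A^λ·α_H^{1−λ}, q_L := β_A^λ·β_H^{1−λ} and B_n^L := exp( a_n^{(q_L)}·ω₀ + Σ_{k=1}^{n} b_k^{(p_L,q_L)} ). Then: (a) B_1^L = exp( (q_L − β_λ)·ω₀ + (p_L − α_λ) ) < 1, and B_n^L < H_{λ,n} for all n ≥ 1; (b) the sequence (B_n^L)_{n≥1} is strictly decreasing; (c) lim_{n→∞} B_n^L = 0; (d) lim_{n→∞} (1/n)·log B_n^L = (p_L/q_L)·(x₀^{(q_L)} + β_λ) − α_λ, where in the case β_A = β_H (in which q_L = β_λ) one sets x₀^{(q_L)} := 0. -/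

import Mathlib

open Real Filter

/-- One transition weight of the Poisson Galton–Watson process with immigration:
probability that the next generation size is `y` given the previous size is `x`. -/
noncomputable def gwStep (β α : ℝ) (x y : ℕ) : ℝ :=
  Real.exp (-(β * (x : ℝ) + α)) * (β * (x : ℝ) + α) ^ y / (Nat.factorial y : ℝ)

/-- The `n`-step path law (pmf on `Fin n → ℕ`) with initial generation size `ω₀`. -/
noncomputable def gwPath (β α : ℝ) (ω₀ n : ℕ) (ω : Fin n → ℕ) : ℝ :=
  ∏ k : Fin n,
    gwStep β α
      (if (k : ℕ) = 0 then ω₀ else ω ⟨(k : ℕ) - 1, Nat.lt_of_le_of_lt (Nat.sub_le _ _) k.2⟩)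
      (ω k)

/-- Hellinger integral of order `lam` between the `n`-step path laws. -/
noncomputable def hellinger (βA αA βH αH lam : ℝ) (ω₀ n : ℕ) : ℝ :=
  ∑' ω : Fin n → ℕ, gwPath βA αA ω₀ n ω ^ lam * gwPath βH αH ω₀ n ω ^ (1 - lam)

/-- The recursion `a₀ = 0`, `a_{n+1} = q·e^{a_n} − βl`. -/
noncomputable def aSeq (q βl : ℝ) : ℕ → ℝ
  | 0 => 0
  | n + 1 => q * Real.exp (aSeq q βl n) - βl

/-- The recursion `b₀ = 0`, `b_{n+1} = p·e^{a_n} − αl`. -/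
noncomputable def bSeq (p q βl αl : ℝ) : ℕ → ℝ
  | 0 => 0
  | n + 1 => p * Real.exp (aSeq q βl n) - αl

section Auxiliary

lemma geom_le_arith {x y w : ℝ} (hx : 0 ≤ x) (hy : 0 ≤ y) (hw0 : 0 ≤ w) (hw1 : w ≤ 1) :
    x ^ w * y ^ (1 - w) ≤ w * x + (1 - w) * y :=
  Real.geom_mean_le_arith_mean2_weighted hw0 (by linarith) hx hy (by ring)

lemma geom_lt_arith {x y w : ℝ} (hx : 0 < x) (hy : 0 < y) (hxy : x ≠ y)
    (hw0 : 0 < w) (hw1 : w < 1) :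
    x ^ w * y ^ (1 - w) < w * x + (1 - w) * y := by
  have hkey := strictConcaveOn_log_Ioi.2 (Set.mem_Ioi.2 hx) (Set.mem_Ioi.2 hy) hxy hw0
      (show (0:ℝ) < 1 - w by linarith) (by ring)
  simp only [smul_eq_mul] at hkey
  have h1 : x ^ w * y ^ (1 - w) = Real.exp (w * Real.log x + (1 - w) * Real.log y) := by
    rw [Real.exp_add, Real.rpow_def_of_pos hx, Real.rpow_def_of_pos hy,
      mul_comm (Real.log x), mul_comm (Real.log y)]
  have h2 : Real.exp (Real.log (w * x + (1 - w) * y)) = w * x + (1 - w) * y :=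
    Real.exp_log (by nlinarith)
  rw [h1, ← h2]
  exact Real.exp_lt_exp.2 hkey

lemma mahler_lt {a b c d w : ℝ} (ha : 0 < a) (hb : 0 < b) (hc : 0 < c) (hd : 0 < d)
    (hw0 : 0 < w) (hw1 : w < 1) (hne : a * d ≠ b * c) :
    a ^ w * c ^ (1 - w) + b ^ w * d ^ (1 - w) < (a + b) ^ w * (c + d) ^ (1 - w) := by
  have hs : 0 < a + b := by linarith
  have ht : 0 < c + d := by linarith
  have hK : 0 < (a + b) ^ w * (c + d) ^ (1 - w) := by positivity
  have e1 : a ^ w * c ^ (1 - w)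
      = (a / (a + b)) ^ w * (c / (c + d)) ^ (1 - w) * ((a + b) ^ w * (c + d) ^ (1 - w)) := by
    rw [Real.div_rpow ha.le hs.le, Real.div_rpow hc.le ht.le]
    field_simp
  have e2 : b ^ w * d ^ (1 - w)
      = (b / (a + b)) ^ w * (d / (c + d)) ^ (1 - w) * ((a + b) ^ w * (c + d) ^ (1 - w)) := by
    rw [Real.div_rpow hb.le hs.le, Real.div_rpow hd.le ht.le]
    field_simp
  have hne' : a / (a + b) ≠ c / (c + d) := by
    intro h
    apply hne
    have h' := (div_eq_div_iff hs.ne' ht.ne').1 h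
    linear_combination h'
  have hlt := geom_lt_arith (div_pos ha hs) (div_pos hc ht) hne' hw0 hw1
  have hle := geom_le_arith (div_pos hb hs).le (div_pos hd ht).le hw0.le hw1.le
  have hone : w * (a / (a + b)) + (1 - w) * (c / (c + d))
      + (w * (b / (a + b)) + (1 - w) * (d / (c + d))) = 1 := by
    field_simp
    ring
  calc a ^ w * c ^ (1 - w) + b ^ w * d ^ (1 - w)
      = ((a / (a + b)) ^ w * (c / (c + d)) ^ (1 - w)
        + (b / (a + b)) ^ w * (d / (c + d)) ^ (1 - w)) * ((a + b) ^ w * (c + d) ^ (1 - w)) := by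
        rw [e1, e2]; ring
    _ < (w * (a / (a + b)) + (1 - w) * (c / (c + d))
        + (w * (b / (a + b)) + (1 - w) * (d / (c + d)))) * ((a + b) ^ w * (c + d) ^ (1 - w)) := by
        apply mul_lt_mul_of_pos_right (add_lt_add_of_lt_of_le hlt hle) hK
    _ = (a + b) ^ w * (c + d) ^ (1 - w) := by rw [hone, one_mul]

noncomputable def mFun (βA αA βH αH lam : ℝ) (x : ℕ) : ℝ :=
  (βA * (x:ℝ) + αA) ^ lam * (βH * (x:ℝ) + αH) ^ (1 - lam)

noncomputable def gg (βA αA βH αH lam : ℝ) (x y : ℕ) : ℝ :=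
  gwStep βA αA x y ^ lam * gwStep βH αH x y ^ (1 - lam)

variable {βA βH αA αH lam : ℝ}

lemma gg_eq (hβA : 0 < βA) (hβH : 0 < βH) (hαA : 0 < αA) (hαH : 0 < αH) (x y : ℕ) :
    gg βA αA βH αH lam x y
      = Real.exp (-(lam * (βA * (x:ℝ) + αA) + (1 - lam) * (βH * (x:ℝ) + αH)))
        * (mFun βA αA βH αH lam x) ^ y / (Nat.factorial y : ℝ) := by
  have hfA : (0:ℝ) < βA * (x:ℝ) + αA := by positivity
  have hfH : (0:ℝ) < βH * (x:ℝ) + αH := by positivity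
  have hyfac : (0:ℝ) < (Nat.factorial y : ℝ) := by exact_mod_cast Nat.factorial_pos y
  unfold gg gwStep mFun
  rw [Real.div_rpow (by positivity) hyfac.le, Real.div_rpow (by positivity) hyfac.le,
    Real.mul_rpow (Real.exp_nonneg _) (by positivity),
    Real.mul_rpow (Real.exp_nonneg _) (by positivity),
    ← Real.exp_mul, ← Real.exp_mul,
    ← Real.rpow_natCast (βA * (x:ℝ) + αA) y, ← Real.rpow_natCast (βH * (x:ℝ) + αH) y,
    ← Real.rpow_mul hfA.le, ← Real.rpow_mul hfH.le, mul_comm (y:ℝ) lam,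
    mul_comm (y:ℝ) (1 - lam), Real.rpow_mul hfA.le, Real.rpow_mul hfH.le,
    Real.rpow_natCast _ y, Real.rpow_natCast _ y, div_mul_div_comm,
    ← Real.rpow_add hyfac]
  have : lam + (1 - lam) = 1 := by ring
  rw [this, Real.rpow_one, mul_pow]
  have h2 : Real.exp (-(βA * (x:ℝ) + αA) * lam) * Real.exp (-(βH * (x:ℝ) + αH) * (1 - lam))
      = Real.exp (-(lam * (βA * (x:ℝ) + αA) + (1 - lam) * (βH * (x:ℝ) + αH))) := by
    rw [← Real.exp_add]; congr 1; ring
  rw [← h2]; ring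

lemma hasSum_poisson (c r : ℝ) :
    HasSum (fun y : ℕ => c * r ^ y / (Nat.factorial y : ℝ)) (c * Real.exp r) := by
  have h : HasSum (fun y : ℕ => r ^ y / (Nat.factorial y : ℝ)) (Real.exp r) := by
    rw [Real.exp_eq_exp_ℝ]
    exact NormedSpace.expSeries_div_hasSum_exp r
  simpa [mul_div_assoc] using h.mul_left c

lemma hasSum_gg_tilt (hβA : 0 < βA) (hβH : 0 < βH) (hαA : 0 < αA) (hαH : 0 < αH)
    (x : ℕ) (t : ℝ) :
    HasSum (fun y : ℕ => gg βA αA βH αH lam x y * Real.exp (t * y))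
      (Real.exp (mFun βA αA βH αH lam x * Real.exp t
        - (lam * (βA * (x:ℝ) + αA) + (1 - lam) * (βH * (x:ℝ) + αH)))) := by
  have h := hasSum_poisson (Real.exp (-(lam * (βA * (x:ℝ) + αA) + (1 - lam) * (βH * (x:ℝ) + αH))))
    (mFun βA αA βH αH lam x * Real.exp t)
  have heq : (fun y : ℕ => gg βA αA βH αH lam x y * Real.exp (t * y))
      = fun y : ℕ => Real.exp (-(lam * (βA * (x:ℝ) + αA) + (1 - lam) * (βH * (x:ℝ) + αH)))
        * (mFun βA αA βH αH lam x * Real.exp t) ^ y / (Nat.factorial y : ℝ) := by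
    funext y
    rw [gg_eq hβA hβH hαA hαH, mul_comm t (y:ℝ), Real.exp_nat_mul, mul_pow]
    ring
  rw [heq, ← Real.exp_add] at *
  convert h using 2
  ring

noncomputable def pathP (βA αA βH αH lam : ℝ) (x n : ℕ) (ω : Fin n → ℕ) : ℝ :=
  ∏ k : Fin n,
    gg βA αA βH αH lam
      (if (k : ℕ) = 0 then x else ω ⟨(k : ℕ) - 1, Nat.lt_of_le_of_lt (Nat.sub_le _ _) k.2⟩)
      (ω k)

lemma gg_pos (hβA : 0 < βA) (hβH : 0 < βH) (hαA : 0 < αA) (hαH : 0 < αH) (x y : ℕ) :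
    0 < gg βA αA βH αH lam x y := by
  rw [gg_eq hβA hβH hαA hαH]
  have hfA : (0:ℝ) < βA * (x:ℝ) + αA := by positivity
  have hfH : (0:ℝ) < βH * (x:ℝ) + αH := by positivity
  have hm : 0 < mFun βA αA βH αH lam x := by
    unfold mFun; positivity
  positivity

lemma pathP_pos (hβA : 0 < βA) (hβH : 0 < βH) (hαA : 0 < αA) (hαH : 0 < αH)
    (x n : ℕ) (ω : Fin n → ℕ) : 0 < pathP βA αA βH αH lam x n ω :=
  Finset.prod_pos fun _ _ => gg_pos hβA hβH hαA hαH _ _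

lemma cons_eq_ite {α : Type*} {n : ℕ} (y : α) (ω : Fin n → α) (j : Fin (n + 1)) :
    ∀ (h : (j : ℕ) - 1 < n),
      Fin.cons (α := fun _ => α) y ω j = if (j : ℕ) = 0 then y else ω ⟨(j : ℕ) - 1, h⟩ := by
  induction j using Fin.cases with
  | zero => intro h; simp
  | succ i =>
      intro h
      have hv : ((Fin.succ i : Fin (n + 1)) : ℕ) = (i : ℕ) + 1 := rfl
      rw [Fin.cons_succ, if_neg (by simp [hv])]
      have he : (⟨((Fin.succ i : Fin (n + 1)) : ℕ) - 1, h⟩ : Fin n) = i := by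
        ext
        simp [hv]
      rw [he]

lemma pathP_cons (x y n : ℕ) (ω : Fin n → ℕ) :
    pathP βA αA βH αH lam x (n + 1) (Fin.cons y ω)
      = gg βA αA βH αH lam x y * pathP βA αA βH αH lam y n ω := by
  unfold pathP
  rw [Fin.prod_univ_succ]
  congr 1
  apply Finset.prod_congr rfl
  intro i _
  simp only [Fin.cons_succ, Fin.val_succ]
  have hlt1 : (i : ℕ) + 1 - 1 < n + 1 := by simpa using Nat.lt_succ_of_lt i.2
  have hlt2 : (i : ℕ) + 1 - 1 - 1 < n := by
    simpa using Nat.lt_of_le_of_lt (Nat.sub_le _ _) i.2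
  rw [if_neg (by omega : ¬((i : ℕ) + 1 = 0)),
    cons_eq_ite y ω ⟨(i : ℕ) + 1 - 1, hlt1⟩ hlt2]
  by_cases h : (i : ℕ) = 0
  · simp [h]
  · rw [if_neg (by omega : ¬((i : ℕ) + 1 - 1 = 0)), if_neg h]
    congr 1

lemma pathP_zero (x : ℕ) (ω : Fin 0 → ℕ) : pathP βA αA βH αH lam x 0 ω = 1 := by
  unfold pathP
  exact Finset.prod_of_isEmpty _

noncomputable def CSeq (p q βl αl : ℝ) (n : ℕ) : ℝ := ∑ k ∈ Finset.Icc 1 n, bSeq p q βl αl k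

lemma CSeq_succ (p q βl αl : ℝ) (n : ℕ) :
    CSeq p q βl αl (n + 1) = CSeq p q βl αl n + (p * Real.exp (aSeq q βl n) - αl) := by
  unfold CSeq
  rw [Finset.sum_Icc_succ_top (by omega : 1 ≤ n + 1)]
  rfl

section Core

variable {βA βH αA αH lam βl αl pL qL : ℝ}

lemma mFun_pos (hβA : 0 < βA) (hβH : 0 < βH) (hαA : 0 < αA) (hαH : 0 < αH) (x : ℕ) :
    0 < mFun βA αA βH αH lam x := by
  have h1 : (0:ℝ) < βA * (x:ℝ) + αA := by positivity
  have h2 : (0:ℝ) < βH * (x:ℝ) + αH := by positivity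
  unfold mFun
  positivity

lemma mFun_le (hβA : 0 < βA) (hβH : 0 < βH) (hαA : 0 < αA) (hαH : 0 < αH)
    (hl0 : 0 < lam) (hl1 : lam < 1)
    (hβl : βl = lam * βA + (1 - lam) * βH) (hαl : αl = lam * αA + (1 - lam) * αH) (x : ℕ) :
    mFun βA αA βH αH lam x ≤ βl * (x:ℝ) + αl := by
  have h := geom_le_arith (show (0:ℝ) ≤ βA * (x:ℝ) + αA by positivity)
    (show (0:ℝ) ≤ βH * (x:ℝ) + αH by positivity) hl0.le hl1.le
  calc mFun βA αA βH αH lam x ≤ lam * (βA * (x:ℝ) + αA) + (1 - lam) * (βH * (x:ℝ) + αH) := h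
    _ = βl * (x:ℝ) + αl := by rw [hβl, hαl]; ring

lemma mFun_gt (hβA : 0 < βA) (hβH : 0 < βH) (hαA : 0 < αA) (hαH : 0 < αH)
    (hγ : αH * βA - αA * βH ≠ 0) (hl0 : 0 < lam) (hl1 : lam < 1)
    (hpL : pL = αA ^ lam * αH ^ (1 - lam)) (hqL : qL = βA ^ lam * βH ^ (1 - lam))
    {x : ℕ} (hx : 1 ≤ x) :
    qL * (x:ℝ) + pL < mFun βA αA βH αH lam x := by
  have hx0 : (0:ℝ) < (x:ℝ) := by exact_mod_cast hx
  have h1 : (βA * (x:ℝ)) ^ lam * (βH * (x:ℝ)) ^ (1 - lam) = qL * (x:ℝ) := by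
    rw [Real.mul_rpow hβA.le hx0.le, Real.mul_rpow hβH.le hx0.le, hqL]
    have h2 : (x:ℝ) ^ lam * (x:ℝ) ^ (1 - lam) = (x:ℝ) := by
      rw [← Real.rpow_add hx0]; simp
    calc βA ^ lam * (x:ℝ) ^ lam * (βH ^ (1 - lam) * (x:ℝ) ^ (1 - lam))
        = βA ^ lam * βH ^ (1 - lam) * ((x:ℝ) ^ lam * (x:ℝ) ^ (1 - lam)) := by ring
      _ = βA ^ lam * βH ^ (1 - lam) * (x:ℝ) := by rw [h2]
  have hne : βA * (x:ℝ) * αH ≠ αA * (βH * (x:ℝ)) := by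
    intro h
    apply hγ
    have h2 : (βA * αH) * (x:ℝ) = (αA * βH) * (x:ℝ) := by linear_combination h
    have h3 := mul_right_cancel₀ hx0.ne' h2
    linarith
  have hmah := mahler_lt (by positivity : (0:ℝ) < βA * (x:ℝ)) hαA
    (by positivity : (0:ℝ) < βH * (x:ℝ)) hαH hl0 hl1 hne
  unfold mFun
  rw [show βA * (x:ℝ) + αA = βA * (x:ℝ) + αA from rfl] at hmah
  rw [← h1, hpL]
  linarith

lemma mFun_ge (hβA : 0 < βA) (hβH : 0 < βH) (hαA : 0 < αA) (hαH : 0 < αH)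
    (hγ : αH * βA - αA * βH ≠ 0) (hl0 : 0 < lam) (hl1 : lam < 1)
    (hpL : pL = αA ^ lam * αH ^ (1 - lam)) (hqL : qL = βA ^ lam * βH ^ (1 - lam))
    (x : ℕ) :
    qL * (x:ℝ) + pL ≤ mFun βA αA βH αH lam x := by
  rcases Nat.eq_zero_or_pos x with h | h
  · subst h
    simp [mFun, hpL]
  · exact (mFun_gt hβA hβH hαA hαH hγ hl0 hl1 hpL hqL h).le

lemma summable_gg (hβA : 0 < βA) (hβH : 0 < βH) (hαA : 0 < αA) (hαH : 0 < αH) (x : ℕ) :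
    Summable (fun y => gg βA αA βH αH lam x y) := by
  have h := (hasSum_gg_tilt (lam := lam) hβA hβH hαA hαH x 0).summable
  simpa using h

lemma tsum_gg (hβA : 0 < βA) (hβH : 0 < βH) (hαA : 0 < αA) (hαH : 0 < αH) (x : ℕ) :
    ∑' y : ℕ, gg βA αA βH αH lam x y
      = Real.exp (mFun βA αA βH αH lam x
        - (lam * (βA * (x:ℝ) + αA) + (1 - lam) * (βH * (x:ℝ) + αH))) := by
  have h := (hasSum_gg_tilt (lam := lam) hβA hβH hαA hαH x 0).tsum_eq
  simpa using h

end Core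

section Core2

variable {βA βH αA αH lam βl αl pL qL : ℝ}

lemma tsum_pathP_nonneg (hβA : 0 < βA) (hβH : 0 < βH) (hαA : 0 < αA) (hαH : 0 < αH)
    (x n : ℕ) : 0 ≤ ∑' ω : Fin n → ℕ, pathP βA αA βH αH lam x n ω :=
  tsum_nonneg fun ω => (pathP_pos hβA hβH hαA hαH x n ω).le

lemma mid (hβA : 0 < βA) (hβH : 0 < βH) (hαA : 0 < αA) (hαH : 0 < αH)
    (hl0 : 0 < lam) (hl1 : lam < 1)
    (hβl : βl = lam * βA + (1 - lam) * βH) (hαl : αl = lam * αA + (1 - lam) * αH)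
    {n : ℕ} (t c : ℝ)
    (hsum : ∀ y : ℕ, Summable (pathP βA αA βH αH lam y n))
    (hle1 : ∀ y : ℕ, ∑' ω, pathP βA αA βH αH lam y n ω ≤ 1)
    (hlow : ∀ y : ℕ, Real.exp (t * (y:ℝ) + c) ≤ ∑' ω, pathP βA αA βH αH lam y n ω)
    (x : ℕ) :
    Summable (pathP βA αA βH αH lam x (n + 1)) ∧
      (∑' ω, pathP βA αA βH αH lam x (n + 1) ω ≤ 1) ∧
      Real.exp (mFun βA αA βH αH lam x * Real.exp t - (βl * (x:ℝ) + αl) + c)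
        ≤ ∑' ω, pathP βA αA βH αH lam x (n + 1) ω := by
  set G := gg βA αA βH αH lam with hG
  set P := pathP βA αA βH αH lam with hP
  have hGpos : ∀ u y : ℕ, 0 < G u y := fun u y => gg_pos hβA hβH hαA hαH u y
  have hGsum : Summable (fun y => G x y) := summable_gg hβA hβH hαA hαH x
  have hTnn : ∀ y : ℕ, 0 ≤ ∑' ω, P y n ω := fun y => tsum_pathP_nonneg hβA hβH hαA hαH y n
  set e := Fin.consEquiv (fun _ : Fin (n + 1) => ℕ) with he
  have hce : ∀ p : ℕ × (Fin n → ℕ), P x (n + 1) (e p) = G x p.1 * P p.1 n p.2 :=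
    fun p => pathP_cons x p.1 n p.2
  have hFnn : 0 ≤ fun p : ℕ × (Fin n → ℕ) => G x p.1 * P p.1 n p.2 :=
    fun p => mul_nonneg (hGpos x p.1).le (pathP_pos hβA hβH hαA hαH _ _ _).le
  have hfib : ∀ y : ℕ, Summable (fun ω : Fin n → ℕ => G x y * P y n ω) :=
    fun y => (hsum y).mul_left _
  have hrow : Summable (fun y : ℕ => G x y * ∑' ω, P y n ω) := by
    apply Summable.of_nonneg_of_le (fun y => mul_nonneg (hGpos x y).le (hTnn y))
      (fun y => ?_) hGsum
    calc G x y * ∑' ω, P y n ω ≤ G x y * 1 :=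
          mul_le_mul_of_nonneg_left (hle1 y) (hGpos x y).le
      _ = G x y := mul_one _
  have hF : Summable (fun p : ℕ × (Fin n → ℕ) => G x p.1 * P p.1 n p.2) := by
    refine (summable_prod_of_nonneg hFnn).2 ⟨hfib, ?_⟩
    simpa only [tsum_mul_left] using hrow
  have hsummable : Summable (P x (n + 1)) := by
    rw [← Equiv.summable_iff e]
    exact hF.congr fun p => (hce p).symm
  have htsum : ∑' ω, P x (n + 1) ω = ∑' y : ℕ, G x y * ∑' ω, P y n ω := by
    rw [← e.tsum_eq (P x (n + 1))]
    calc ∑' p, P x (n + 1) (e p)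
        = ∑' p : ℕ × (Fin n → ℕ), G x p.1 * P p.1 n p.2 := tsum_congr hce
      _ = ∑' (y : ℕ) (ω : Fin n → ℕ), G x y * P y n ω := Summable.tsum_prod' hF hfib
      _ = ∑' y : ℕ, G x y * ∑' ω, P y n ω := tsum_congr fun y => tsum_mul_left
  have h5 : lam * (βA * (x:ℝ) + αA) + (1 - lam) * (βH * (x:ℝ) + αH) = βl * (x:ℝ) + αl := by
    rw [hβl, hαl]; ring
  refine ⟨hsummable, ?_, ?_⟩
  · rw [htsum]
    have h2 : ∑' y : ℕ, G x y * ∑' ω, P y n ω ≤ ∑' y : ℕ, G x y := by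
      refine Summable.tsum_le_tsum (fun y => ?_) hrow hGsum
      calc G x y * ∑' ω, P y n ω ≤ G x y * 1 :=
            mul_le_mul_of_nonneg_left (hle1 y) (hGpos x y).le
        _ = G x y := mul_one _
    have h3 := tsum_gg (lam := lam) hβA hβH hαA hαH x
    have h4 : mFun βA αA βH αH lam x
        - (lam * (βA * (x:ℝ) + αA) + (1 - lam) * (βH * (x:ℝ) + αH)) ≤ 0 := by
      have := mFun_le hβA hβH hαA hαH hl0 hl1 hβl hαl x
      linarith
    calc ∑' y : ℕ, G x y * ∑' ω, P y n ω ≤ ∑' y : ℕ, G x y := h2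
      _ = Real.exp (mFun βA αA βH αH lam x
          - (lam * (βA * (x:ℝ) + αA) + (1 - lam) * (βH * (x:ℝ) + αH))) := h3
      _ ≤ Real.exp 0 := Real.exp_le_exp.2 h4
      _ = 1 := Real.exp_zero
  · rw [htsum]
    have hterm : ∀ y : ℕ, G x y * Real.exp (t * (y:ℝ) + c) ≤ G x y * ∑' ω, P y n ω :=
      fun y => mul_le_mul_of_nonneg_left (hlow y) (hGpos x y).le
    have hts := hasSum_gg_tilt (lam := lam) hβA hβH hαA hαH x t
    rw [h5] at hts
    have h6 := hts.mul_right (Real.exp c)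
    rw [← Real.exp_add] at h6
    have h7 : (fun y : ℕ => G x y * Real.exp (t * (y:ℝ)) * Real.exp c)
        = fun y : ℕ => G x y * Real.exp (t * (y:ℝ) + c) := by
      funext y
      rw [mul_assoc, ← Real.exp_add]
    rw [h7] at h6
    calc Real.exp (mFun βA αA βH αH lam x * Real.exp t - (βl * (x:ℝ) + αl) + c)
        = ∑' y : ℕ, G x y * Real.exp (t * (y:ℝ) + c) := h6.tsum_eq.symm
      _ ≤ ∑' y : ℕ, G x y * ∑' ω, P y n ω := Summable.tsum_le_tsum hterm h6.summable hrow

lemma key (hβA : 0 < βA) (hβH : 0 < βH) (hαA : 0 < αA) (hαH : 0 < αH)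
    (hγ : αH * βA - αA * βH ≠ 0) (hl0 : 0 < lam) (hl1 : lam < 1)
    (hβl : βl = lam * βA + (1 - lam) * βH) (hαl : αl = lam * αA + (1 - lam) * αH)
    (hpL : pL = αA ^ lam * αH ^ (1 - lam)) (hqL : qL = βA ^ lam * βH ^ (1 - lam)) :
    ∀ n : ℕ,
      (∀ x : ℕ, Summable (pathP βA αA βH αH lam x n)) ∧
      (∀ x : ℕ, ∑' ω, pathP βA αA βH αH lam x n ω ≤ 1) ∧
      (∀ x : ℕ, Real.exp (aSeq qL βl n * (x:ℝ) + CSeq pL qL βl αl n)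
          ≤ ∑' ω, pathP βA αA βH αH lam x n ω) := by
  intro n
  induction n with
  | zero =>
      have huniq : ∀ (b : Fin 0 → ℕ), b = default := fun b => Subsingleton.elim b default
      have hts : ∀ x : ℕ, ∑' ω : Fin 0 → ℕ, pathP βA αA βH αH lam x 0 ω = 1 := by
        intro x
        rw [tsum_eq_single (default : Fin 0 → ℕ) (fun b hb => absurd (huniq b) hb)]
        exact pathP_zero x default
      refine ⟨fun x => ⟨pathP βA αA βH αH lam x 0 default,
        hasSum_single default (fun b hb => absurd (huniq b) hb)⟩, fun x => le_of_eq (hts x),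
        fun x => ?_⟩
      rw [hts x]
      simp [aSeq, CSeq]
  | succ n ih =>
      obtain ⟨hsum, hle1, hlow⟩ := ih
      have hmid := fun x => mid hβA hβH hαA hαH hl0 hl1 hβl hαl
        (aSeq qL βl n) (CSeq pL qL βl αl n) hsum hle1 hlow x
      refine ⟨fun x => (hmid x).1, fun x => (hmid x).2.1, fun x => le_trans ?_ (hmid x).2.2⟩
      apply Real.exp_le_exp.2
      have hge := mFun_ge hβA hβH hαA hαH hγ hl0 hl1 hpL hqL x
      have hmul := mul_le_mul_of_nonneg_right hge (Real.exp_pos (aSeq qL βl n)).le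
      have hA : aSeq qL βl (n + 1) = qL * Real.exp (aSeq qL βl n) - βl := rfl
      have hC := CSeq_succ pL qL βl αl n
      rw [hA, hC]
      nlinarith [hmul]

lemma key_strict (hβA : 0 < βA) (hβH : 0 < βH) (hαA : 0 < αA) (hαH : 0 < αH)
    (hγ : αH * βA - αA * βH ≠ 0) (hl0 : 0 < lam) (hl1 : lam < 1)
    (hβl : βl = lam * βA + (1 - lam) * βH) (hαl : αl = lam * αA + (1 - lam) * αH)
    (hpL : pL = αA ^ lam * αH ^ (1 - lam)) (hqL : qL = βA ^ lam * βH ^ (1 - lam))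
    (n : ℕ) {x : ℕ} (hx : 1 ≤ x) :
    Real.exp (aSeq qL βl (n + 1) * (x:ℝ) + CSeq pL qL βl αl (n + 1))
      < ∑' ω, pathP βA αA βH αH lam x (n + 1) ω := by
  obtain ⟨hsum, hle1, hlow⟩ := key hβA hβH hαA hαH hγ hl0 hl1 hβl hαl hpL hqL n
  have hmid := (mid hβA hβH hαA hαH hl0 hl1 hβl hαl
    (aSeq qL βl n) (CSeq pL qL βl αl n) hsum hle1 hlow x).2.2
  refine lt_of_lt_of_le ?_ hmid
  apply Real.exp_lt_exp.2
  have hgt := mFun_gt hβA hβH hαA hαH hγ hl0 hl1 hpL hqL hx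
  have hmul := mul_lt_mul_of_pos_right hgt (Real.exp_pos (aSeq qL βl n))
  have hA : aSeq qL βl (n + 1) = qL * Real.exp (aSeq qL βl n) - βl := rfl
  rw [hA, CSeq_succ]
  nlinarith [hmul]

end Core2

lemma gwStep_nonneg {β α : ℝ} (hβ : 0 < β) (hα : 0 < α) (x y : ℕ) : 0 ≤ gwStep β α x y := by
  unfold gwStep
  positivity

lemma hellinger_eq_pathP {βA βH αA αH lam : ℝ}
    (hβA : 0 < βA) (hβH : 0 < βH) (hαA : 0 < αA) (hαH : 0 < αH) (ω₀ n : ℕ) :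
    hellinger βA αA βH αH lam ω₀ n = ∑' ω, pathP βA αA βH αH lam ω₀ n ω := by
  unfold hellinger
  apply tsum_congr
  intro ω
  unfold gwPath pathP gg
  rw [← Real.finset_prod_rpow _ _ (fun i _ => gwStep_nonneg hβA hαA _ _) lam,
    ← Real.finset_prod_rpow _ _ (fun i _ => gwStep_nonneg hβH hαH _ _) (1 - lam),
    ← Finset.prod_mul_distrib]

end Auxiliary

set_option maxHeartbeats 2000000 in
/-- Detailed behaviour of the recursive lower bounds
`B_n^L = exp(a_n^{(q_L)}·ω₀ + Σ_{k=1}^n b_k^{(p_L,q_L)})` with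
`p_L = α_A^λ·α_H^{1−λ}`, `q_L = β_A^λ·β_H^{1−λ}`:  value and `< 1` at `n = 1`, lower bound
for the Hellinger integral, strict decrease, vanishing limit, and exponential decay rate,
where `x₀` is the unique negative fixed point of `x ↦ q_L·e^x − β_λ` if `β_A ≠ β_H`,
and `x₀ := 0` if `β_A = β_H`. -/
theorem hellinger_lower_bound_detailed (βA βH αA αH lam : ℝ)
    (hβA : 0 < βA) (hβH : 0 < βH) (hαA : 0 < αA) (hαH : 0 < αH)
    (hγ : αH * βA - αA * βH ≠ 0)
    (hlam : lam ∈ Set.Ioo (0 : ℝ) 1) (ω₀ : ℕ) (hω₀ : 1 ≤ ω₀)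
    (βl αl pL qL : ℝ)
    (hβl : βl = lam * βA + (1 - lam) * βH) (hαl : αl = lam * αA + (1 - lam) * αH)
    (hpL : pL = αA ^ lam * αH ^ (1 - lam)) (hqL : qL = βA ^ lam * βH ^ (1 - lam))
    (B : ℕ → ℝ)
    (hB : ∀ n : ℕ,
      B n = Real.exp (aSeq qL βl n * (ω₀ : ℝ) + ∑ k ∈ Finset.Icc 1 n, bSeq pL qL βl αl k))
    (x₀ : ℝ)
    (hx₀ : (βA ≠ βH ∧ x₀ < 0 ∧ qL * Real.exp x₀ - βl = x₀) ∨ (βA = βH ∧ x₀ = 0)) :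
    (B 1 = Real.exp ((qL - βl) * (ω₀ : ℝ) + (pL - αl)) ∧ B 1 < 1) ∧
    (∀ n : ℕ, 1 ≤ n → B n < hellinger βA αA βH αH lam ω₀ n) ∧
    (∀ n : ℕ, 1 ≤ n → B (n + 1) < B n) ∧
    Tendsto B atTop (nhds 0) ∧
    Tendsto (fun n : ℕ => (1 / (n : ℝ)) * Real.log (B n)) atTop
      (nhds ((pL / qL) * (x₀ + βl) - αl)) := by
  obtain ⟨hl0, hl1⟩ := hlam
  have hω1 : (1 : ℝ) ≤ (ω₀ : ℝ) := by exact_mod_cast hω₀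
  have hqL0 : 0 < qL := by rw [hqL]; positivity
  have hpL0 : 0 < pL := by rw [hpL]; positivity
  have hβl0 : 0 < βl := by rw [hβl]; nlinarith
  have hqle : qL ≤ βl := by rw [hqL, hβl]; exact geom_le_arith hβA.le hβH.le hl0.le hl1.le
  have hple : pL ≤ αl := by rw [hαl, hpL]; exact geom_le_arith hαA.le hαH.le hl0.le hl1.le
  have hBC : ∀ n : ℕ,
      B n = Real.exp (aSeq qL βl n * (ω₀ : ℝ) + CSeq pL qL βl αl n) := hB
  have ha1 : aSeq qL βl 1 = qL - βl := by
    have h : aSeq qL βl 1 = qL * Real.exp (aSeq qL βl 0) - βl := rfl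
    rw [h, show aSeq qL βl 0 = 0 from rfl]
    simp
  have hb1 : bSeq pL qL βl αl 1 = pL - αl := by
    have h : bSeq pL qL βl αl 1 = pL * Real.exp (aSeq qL βl 0) - αl := rfl
    rw [h, show aSeq qL βl 0 = 0 from rfl]
    simp
  have hC1 : CSeq pL qL βl αl 1 = pL - αl := by
    unfold CSeq
    rw [Finset.Icc_self, Finset.sum_singleton, hb1]
  -- Part (a)
  have hB1 : B 1 = Real.exp ((qL - βl) * (ω₀ : ℝ) + (pL - αl)) := by
    rw [hBC 1, ha1, hC1]
  have hB1lt : B 1 < 1 := by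
    rw [hB1]
    rw [show (1 : ℝ) = Real.exp 0 from (Real.exp_zero).symm]
    apply Real.exp_lt_exp.2
    by_cases hbe : βA = βH
    · have hαne : αA ≠ αH := by
        intro h
        apply hγ
        rw [hbe, h]
        ring
      have hplt : pL < αl := by
        rw [hpL, hαl]
        exact geom_lt_arith hαA hαH hαne hl0 hl1
      have hqeq : qL = βl := by
        rw [hqL, hβl, hbe]
        have h1 : βH ^ lam * βH ^ (1 - lam) = βH := by
          rw [← Real.rpow_add hβH]
          norm_num
        rw [h1]
        ring
      rw [hqeq]
      simp
      linarith
    · have hqlt : qL < βl := by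
        rw [hqL, hβl]
        exact geom_lt_arith hβA hβH hbe hl0 hl1
      have h2 : (qL - βl) * (ω₀ : ℝ) ≤ (qL - βl) * 1 :=
        mul_le_mul_of_nonpos_left hω1 (by linarith)
      linarith
  -- Part (b) lower bound for Hellinger
  have hHell : ∀ n : ℕ, 1 ≤ n → B n < hellinger βA αA βH αH lam ω₀ n := by
    intro n hn
    obtain ⟨m, rfl⟩ : ∃ m, n = m + 1 := ⟨n - 1, by omega⟩
    rw [hBC, hellinger_eq_pathP hβA hβH hαA hαH]
    exact key_strict hβA hβH hαA hαH hγ hl0 hl1 hβl hαl hpL hqL m hω₀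
  -- asymptotic bundle
  obtain ⟨hAlim, hstep, hLneg, hLeq⟩ :
      Tendsto (aSeq qL βl) atTop (nhds x₀) ∧
      (∀ n : ℕ, aSeq qL βl (n + 1) * (ω₀ : ℝ) + (pL * Real.exp (aSeq qL βl n) - αl)
          < aSeq qL βl n * (ω₀ : ℝ)) ∧
      pL * Real.exp x₀ - αl < 0 ∧
      pL * Real.exp x₀ - αl = pL / qL * (x₀ + βl) - αl := by
    rcases hx₀ with ⟨hne, hx0neg, hfix⟩ | ⟨hbe, hx00⟩
    · -- case βA ≠ βH
      have hqlt : qL < βl := by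
        rw [hqL, hβl]
        exact geom_lt_arith hβA hβH hne hl0 hl1
      have hi : ∀ n, x₀ < aSeq qL βl n := by
        intro n
        induction n with
        | zero => exact hx0neg
        | succ n ih =>
            have h1 : qL * Real.exp x₀ < qL * Real.exp (aSeq qL βl n) :=
              mul_lt_mul_of_pos_left (Real.exp_lt_exp.2 ih) hqL0
            calc x₀ = qL * Real.exp x₀ - βl := hfix.symm
              _ < qL * Real.exp (aSeq qL βl n) - βl := by linarith
              _ = aSeq qL βl (n + 1) := rfl
      have hdec : ∀ n, aSeq qL βl (n + 1) < aSeq qL βl n := by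
        intro n
        induction n with
        | zero =>
            show qL * Real.exp (aSeq qL βl 0) - βl < aSeq qL βl 0
            rw [show aSeq qL βl 0 = 0 from rfl]
            simp
            linarith
        | succ n ih =>
            show qL * Real.exp (aSeq qL βl (n + 1)) - βl
                < qL * Real.exp (aSeq qL βl n) - βl
            have := mul_lt_mul_of_pos_left (Real.exp_lt_exp.2 ih) hqL0
            linarith
      have hanti : Antitone (aSeq qL βl) := antitone_nat_of_succ_le fun n => (hdec n).le
      have hbdd : BddBelow (Set.range (aSeq qL βl)) := by
        refine ⟨x₀, ?_⟩
        rintro y ⟨n, rfl⟩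
        exact (hi n).le
      have hlimℓ := tendsto_atTop_ciInf hanti hbdd
      set ℓ := ⨅ n, aSeq qL βl n with hℓdef
      have hℓge : x₀ ≤ ℓ := le_ciInf fun n => (hi n).le
      have hℓle : ℓ ≤ aSeq qL βl 1 := ciInf_le hbdd 1
      have hℓneg : ℓ < 0 := by rw [ha1] at hℓle; linarith
      have hfixℓ : qL * Real.exp ℓ - βl = ℓ := by
        have h1 : Tendsto (fun n => aSeq qL βl (n + 1)) atTop (nhds ℓ) :=
          hlimℓ.comp (tendsto_add_atTop_nat 1)
        have h2 : Tendsto (fun n => qL * Real.exp (aSeq qL βl n) - βl) atTop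
            (nhds (qL * Real.exp ℓ - βl)) :=
          (((Real.continuous_exp.tendsto ℓ).comp hlimℓ).const_mul qL).sub_const βl
        exact tendsto_nhds_unique h2 (h1.congr fun n => rfl)
      have hsℓ : 0 < ℓ + βl := by
        have := mul_pos hqL0 (Real.exp_pos ℓ)
        linarith [hfixℓ]
      have hℓeq : ℓ = x₀ := by
        by_contra hne2
        have hlt : x₀ < ℓ := lt_of_le_of_ne hℓge (Ne.symm hne2)
        have he1 : (x₀ - ℓ) + 1 < Real.exp (x₀ - ℓ) := Real.add_one_lt_exp (by linarith)
        have hex : Real.exp x₀ = Real.exp ℓ * Real.exp (x₀ - ℓ) := by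
          rw [← Real.exp_add]
          ring_nf
        have h1 : (ℓ + βl) * ((x₀ - ℓ) + 1) < x₀ + βl := by
          have heq : x₀ + βl = (ℓ + βl) * Real.exp (x₀ - ℓ) := by
            calc x₀ + βl = qL * Real.exp x₀ := by linarith [hfix]
              _ = qL * Real.exp ℓ * Real.exp (x₀ - ℓ) := by rw [hex]; ring
              _ = (ℓ + βl) * Real.exp (x₀ - ℓ) := by
                  rw [show qL * Real.exp ℓ = ℓ + βl by linarith [hfixℓ]]
          rw [heq]
          exact mul_lt_mul_of_pos_left he1 hsℓ
        have hgt1 : 1 < ℓ + βl := by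
          by_contra hc
          push_neg at hc
          nlinarith [h1, mul_nonneg (by linarith : (0:ℝ) ≤ ℓ - x₀)
            (by linarith : (0:ℝ) ≤ 1 - (ℓ + βl))]
        have he2 : (-ℓ) + 1 < Real.exp (-ℓ) := Real.add_one_lt_exp (by linarith)
        have h2 : (ℓ + βl) * ((-ℓ) + 1) < qL := by
          have hqe : qL = (ℓ + βl) * Real.exp (-ℓ) := by
            have hee : Real.exp ℓ * Real.exp (-ℓ) = 1 := by
              rw [← Real.exp_add]
              simp
            calc qL = qL * (Real.exp ℓ * Real.exp (-ℓ)) := by rw [hee]; ring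
              _ = (ℓ + βl) * Real.exp (-ℓ) := by
                  rw [← mul_assoc, show qL * Real.exp ℓ = ℓ + βl by linarith [hfixℓ]]
          rw [hqe]
          exact mul_lt_mul_of_pos_left he2 hsℓ
        nlinarith [h2, hqlt, mul_nonneg (by linarith : (0:ℝ) ≤ -ℓ)
          (by linarith : (0:ℝ) ≤ ℓ + βl - 1)]
      rw [hℓeq] at hlimℓ
      have hAle0 : ∀ n, aSeq qL βl n ≤ 0 := by
        intro n
        have := hanti (Nat.zero_le n)
        rwa [show aSeq qL βl 0 = 0 from rfl] at this
      refine ⟨hlimℓ, fun n => ?_, ?_, ?_⟩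
      · have h1 : Real.exp (aSeq qL βl n) ≤ 1 := Real.exp_le_one_iff.2 (hAle0 n)
        have h2 : pL * Real.exp (aSeq qL βl n) ≤ pL * 1 :=
          mul_le_mul_of_nonneg_left h1 hpL0.le
        have h3 : (aSeq qL βl (n + 1) - aSeq qL βl n) * (ω₀ : ℝ)
            ≤ (aSeq qL βl (n + 1) - aSeq qL βl n) * 1 :=
          mul_le_mul_of_nonpos_left hω1 (by linarith [hdec n])
        nlinarith [hdec n]
      · have h1 : Real.exp x₀ < 1 := Real.exp_lt_one_iff.2 hx0neg
        nlinarith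
      · have h9 : pL / qL * (x₀ + βl) = pL * Real.exp x₀ := by
          rw [show x₀ + βl = qL * Real.exp x₀ by linarith [hfix]]
          field_simp
        linarith
    · -- case βA = βH
      subst hx00
      have hαne : αA ≠ αH := by
        intro h
        apply hγ
        rw [hbe, h]
        ring
      have hplt : pL < αl := by
        rw [hpL, hαl]
        exact geom_lt_arith hαA hαH hαne hl0 hl1
      have hqeq : qL = βl := by
        rw [hqL, hβl, hbe]
        have h1 : βH ^ lam * βH ^ (1 - lam) = βH := by
          rw [← Real.rpow_add hβH]
          norm_num
        rw [h1]
        ring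
      have hA0 : ∀ n, aSeq qL βl n = 0 := by
        intro n
        induction n with
        | zero => rfl
        | succ n ih =>
            show qL * Real.exp (aSeq qL βl n) - βl = 0
            rw [ih]
            simp
            linarith
      refine ⟨tendsto_const_nhds.congr fun n => (hA0 n).symm, fun n => ?_, by simp; linarith, ?_⟩
      · rw [hA0 n, hA0 (n + 1)]
        simp
        linarith
      · rw [Real.exp_zero, zero_add, hqeq, div_mul_cancel₀ pL hβl0.ne', mul_one]
  -- common conclusions
  have hSrange : ∀ n : ℕ, CSeq pL qL βl αl n
      = ∑ i ∈ Finset.range n, (pL * Real.exp (aSeq qL βl i) - αl) := by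
    intro n
    unfold CSeq
    rw [← Finset.Ico_add_one_right_eq_Icc, Finset.sum_Ico_eq_sum_range]
    apply Finset.sum_congr rfl
    intro i _
    rw [add_comm 1 i]
    rfl
  have hlogB : ∀ n : ℕ, Real.log (B n) = aSeq qL βl n * (ω₀ : ℝ) + CSeq pL qL βl αl n := by
    intro n
    rw [hBC n, Real.log_exp]
  have hu : Tendsto (fun i : ℕ => pL * Real.exp (aSeq qL βl i) - αl) atTop
      (nhds (pL * Real.exp x₀ - αl)) :=
    (((Real.continuous_exp.tendsto x₀).comp hAlim).const_mul pL).sub_const αl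
  have hces := hu.cesaro
  have hterm1 : Tendsto (fun n : ℕ => (n : ℝ)⁻¹ * (aSeq qL βl n * (ω₀ : ℝ))) atTop (nhds 0) := by
    have h := tendsto_inv_atTop_nhds_zero_nat.mul (hAlim.mul_const ((ω₀ : ℝ)))
    simpa using h
  have hrate : Tendsto (fun n : ℕ => (1 / (n : ℝ)) * Real.log (B n)) atTop
      (nhds (pL / qL * (x₀ + βl) - αl)) := by
    have hsum2 := hterm1.add hces
    rw [zero_add, hLeq] at hsum2
    refine hsum2.congr fun n => ?_
    rw [hlogB n, hSrange n, one_div, mul_add]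
  have hdecB : ∀ n : ℕ, B (n + 1) < B n := by
    intro n
    rw [hBC, hBC]
    apply Real.exp_lt_exp.2
    have hCs := CSeq_succ pL qL βl αl n
    have := hstep n
    calc aSeq qL βl (n + 1) * (ω₀ : ℝ) + CSeq pL qL βl αl (n + 1)
        = aSeq qL βl (n + 1) * (ω₀ : ℝ) + (pL * Real.exp (aSeq qL βl n) - αl)
          + CSeq pL qL βl αl n := by rw [hCs]; ring
      _ < aSeq qL βl n * (ω₀ : ℝ) + CSeq pL qL βl αl n := by linarith
  have hLneg2 : pL / qL * (x₀ + βl) - αl < 0 := by rw [← hLeq]; exact hLneg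
  have hVbot : Tendsto (fun n : ℕ => aSeq qL βl n * (ω₀ : ℝ) + CSeq pL qL βl αl n)
      atTop atBot := by
    have hhalf : pL / qL * (x₀ + βl) - αl < (pL / qL * (x₀ + βl) - αl) / 2 := by linarith
    have hev : ∀ᶠ n : ℕ in atTop,
        (1 / (n : ℝ)) * Real.log (B n) < (pL / qL * (x₀ + βl) - αl) / 2 :=
      hrate.eventually_lt_const hhalf
    have hbound : ∀ᶠ n : ℕ in atTop,
        aSeq qL βl n * (ω₀ : ℝ) + CSeq pL qL βl αl n
          ≤ (n : ℝ) * ((pL / qL * (x₀ + βl) - αl) / 2) := by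
      filter_upwards [hev, Filter.eventually_ge_atTop 1] with n h1 h2
      have hn0 : (0 : ℝ) < (n : ℝ) := by exact_mod_cast h2
      have h3 := mul_lt_mul_of_pos_left h1 hn0
      have heq : (n : ℝ) * ((1 / (n : ℝ)) * Real.log (B n)) = Real.log (B n) := by
        field_simp
      rw [heq, hlogB n] at h3
      exact h3.le
    have hnb : Tendsto (fun n : ℕ => (n : ℝ) * ((pL / qL * (x₀ + βl) - αl) / 2)) atTop atBot :=
      tendsto_natCast_atTop_atTop.atTop_mul_const_of_neg (by linarith)
    exact tendsto_atBot_mono' atTop hbound hnb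
  have hB0 : Tendsto B atTop (nhds 0) := by
    have h := Real.tendsto_exp_atBot.comp hVbot
    exact h.congr fun n => (hBC n).symm
  exact ⟨⟨hB1, hB1lt⟩, hHell, fun n _ => hdecB n, hB0, hrate⟩
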